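/- For n ≥ 3 and any 1 ≤ i ≤ n−1, the meet in the weak Bruhat lattice of the n−2 maximal proper elements {v_k : k ≠ i} (where v_k is the permutation inverting all pairs except (k,k+1)) is the permutation [i+1,…,n,1,…,i], i.e., the permutation whose inversion set is {(k,l) : k ≤ i < l}; in particular this meet inverts the pair (1,n). Moreover, the meet of all n−1 maximal proper elements is the identity. -/

import Mathlib

set_option linter.deprecated false


/-- The weak Bruhat order on the symmetric group on `{0, …, n-1}`. -/
def weakBruhat (n : ℕ) (σ τ : Equiv.Perm (Fin n)) : Prop :=
  ∀ i j : Fin n, i < j → σ j < σ i → τ j < τ i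

/-- The maximal proper element `v_k` of the weak Bruhat order: the permutation inverting
every pair except the adjacent pair `(k, k+1)` (0-indexed), i.e. `w₀ ∘ (k, k+1)`. -/
def vmax (n : ℕ) (k : ℕ) (hk : k + 1 < n) : Equiv.Perm (Fin n) :=
  Fin.revPerm * Equiv.swap ⟨k, by omega⟩ ⟨k + 1, hk⟩

lemma vmax_lt_iff (n k : ℕ) (hk : k + 1 < n) (a b : Fin n) (hab : a < b) :
    vmax n k hk b < vmax n k hk a ↔ ¬((a : ℕ) = k ∧ (b : ℕ) = k + 1) := by
  simp only [vmax, Equiv.Perm.mul_apply, Fin.revPerm_apply, Fin.rev_lt_rev]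
  rw [Fin.lt_def] at hab
  rw [Fin.lt_def]
  simp only [Equiv.swap_apply_def, Fin.ext_iff]
  split_ifs <;> simp_all <;> omega

lemma adj_inv_exists (n : ℕ) (τ : Equiv.Perm (Fin n)) :
    ∀ m : ℕ, ∀ a b : Fin n, (b : ℕ) = (a : ℕ) + m + 1 → τ b < τ a →
    ∃ j : ℕ, ∃ hj : j + 1 < n, (a : ℕ) ≤ j ∧ j + 1 ≤ (b : ℕ) ∧
      τ ⟨j + 1, hj⟩ < τ ⟨j, by omega⟩ := by
  intro m
  induction m with
  | zero =>
    intro a b hb hinv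
    have hbn : (b : ℕ) < n := b.isLt
    refine ⟨(a : ℕ), by omega, le_refl _, by omega, ?_⟩
    have h1 : (⟨(a : ℕ) + 1, by omega⟩ : Fin n) = b := by apply Fin.ext; simp; omega
    have h2 : (⟨(a : ℕ), by omega⟩ : Fin n) = a := by apply Fin.ext; simp
    rw [h1, h2]; exact hinv
  | succ m ih =>
    intro a b hb hinv
    have hbn : (b : ℕ) < n := b.isLt
    set mid : Fin n := ⟨(a : ℕ) + m + 1, by omega⟩ with hmid
    by_cases h : τ mid < τ a
    · obtain ⟨j, hj, h1, h2, h3⟩ := ih a mid rfl h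
      have : (mid : ℕ) = (a : ℕ) + m + 1 := rfl
      exact ⟨j, hj, h1, by omega, h3⟩
    · push_neg at h
      have hlt : τ b < τ mid := lt_of_lt_of_le hinv h
      refine ⟨(a : ℕ) + m + 1, by omega, by omega, by omega, ?_⟩
      have h1 : (⟨(a : ℕ) + m + 1 + 1, by omega⟩ : Fin n) = b := by
        apply Fin.ext; simp; omega
      rw [h1]; exact hlt

/-- If τ has an inversion (a,b) then it has an adjacent inversion (j, j+1) with a ≤ j < b. -/
lemma adj_inv_of_inv (n : ℕ) (τ : Equiv.Perm (Fin n)) (a b : Fin n) (hab : a < b)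
    (hinv : τ b < τ a) :
    ∃ j : ℕ, ∃ hj : j + 1 < n, (a : ℕ) ≤ j ∧ j + 1 ≤ (b : ℕ) ∧
      τ ⟨j + 1, hj⟩ < τ ⟨j, by omega⟩ := by
  have h : (b : ℕ) = (a : ℕ) + ((b : ℕ) - (a : ℕ) - 1) + 1 := by
    have := Fin.lt_def.mp hab; omega
  exact adj_inv_exists n τ _ a b h hinv


/-- for `n ≥ 3` and each `i`, the meet in the weak Bruhat lattice of the
`n-2` maximal proper elements `{v_k : k ≠ i}` is the cyclic-type permutation
`[i+1,…,n,1,…,i]`, namely the permutation whose inversion set is `{(a,b) : a ≤ i < b}`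
(0-indexed); in particular this meet inverts the pair `(1,n)` (0-indexed `(0,n-1)`).
Moreover the only common lower bound of all `n-1` maximal proper elements is the
identity (i.e. their meet is the identity). -/
theorem meet_of_maximals (n : ℕ) (hn : 3 ≤ n) (i : ℕ) (hi : i + 1 < n) :
    (∃ c : Equiv.Perm (Fin n),
      (∀ a b : Fin n, a < b → (c b < c a ↔ ((a : ℕ) ≤ i ∧ i < (b : ℕ)))) ∧
      (∀ k : ℕ, ∀ hk : k + 1 < n, k ≠ i → weakBruhat n c (vmax n k hk)) ∧
      (∀ τ : Equiv.Perm (Fin n),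
        (∀ k : ℕ, ∀ hk : k + 1 < n, k ≠ i → weakBruhat n τ (vmax n k hk)) →
        weakBruhat n τ c) ∧
      c ⟨n - 1, by omega⟩ < c ⟨0, by omega⟩) ∧
    (∀ τ : Equiv.Perm (Fin n),
      (∀ k : ℕ, ∀ hk : k + 1 < n, weakBruhat n τ (vmax n k hk)) → τ = 1) := by
  have hn0 : 0 < n := by omega
  haveI : NeZero n := ⟨by omega⟩
  constructor
  · -- the meet c: addition by n - 1 - i
    set d : Fin n := ⟨n - 1 - i, by omega⟩ with hd
    set c : Equiv.Perm (Fin n) := Equiv.addRight d with hcdef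
    have cval : ∀ a : Fin n, (c a : ℕ) =
        if (a : ℕ) ≤ i then (a : ℕ) + (n - 1 - i) else (a : ℕ) - (i + 1) := by
      intro a
      have han : (a : ℕ) < n := a.isLt
      have : (c a : ℕ) = ((a : ℕ) + (n - 1 - i)) % n := by
        simp [hcdef, Fin.val_add, hd]
      rw [this]
      split_ifs with h
      · rw [Nat.mod_eq_of_lt (by omega)]
      · have h2 : (a : ℕ) + (n - 1 - i) = ((a : ℕ) - (i + 1)) + n := by omega
        rw [h2, Nat.add_mod_right, Nat.mod_eq_of_lt (by omega)]
    have hc : ∀ a b : Fin n, a < b → (c b < c a ↔ ((a : ℕ) ≤ i ∧ i < (b : ℕ))) := by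
      intro a b hab
      have := Fin.lt_def.mp hab
      rw [Fin.lt_def, cval a, cval b]
      have han : (a : ℕ) < n := a.isLt
      have hbn : (b : ℕ) < n := b.isLt
      split_ifs <;> constructor <;> intro h' <;> omega
    refine ⟨c, hc, ?_, ?_, ?_⟩
    · -- c is a lower bound of each vmax k, k ≠ i
      intro k hk hki a b hab hinv
      rw [vmax_lt_iff n k hk a b hab]
      rw [hc a b hab] at hinv
      rintro ⟨rfl, h2⟩
      omega
    · -- c is the greatest lower bound
      intro τ hτ a b hab hinv
      rw [hc a b hab]
      by_contra hcon
      obtain ⟨j, hj, h1, h2, h3⟩ := adj_inv_of_inv n τ a b hab hinv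
      have hji : j ≠ i := by
        have := Fin.lt_def.mp hab
        rcases not_and_or.mp hcon with h | h <;> push_neg at h <;> omega
      have := hτ j hj hji ⟨j, by omega⟩ ⟨j + 1, hj⟩ (by simp [Fin.lt_def]) h3
      rw [vmax_lt_iff n j hj _ _ (by simp [Fin.lt_def])] at this
      simp at this
    · -- c inverts (0, n-1)
      rw [hc ⟨0, by omega⟩ ⟨n - 1, by omega⟩ (by simp [Fin.lt_def]; omega)]
      simp
      omega
  · -- meet of all maximals is the identity
    intro τ hτ
    have hmono : ∀ j : ℕ, ∀ hj : j + 1 < n, τ ⟨j, by omega⟩ < τ ⟨j + 1, hj⟩ := by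
      intro j hj
      by_contra h
      push_neg at h
      have hne : τ ⟨j + 1, hj⟩ ≠ τ ⟨j, by omega⟩ := by
        intro he
        have := τ.injective he
        simp [Fin.ext_iff] at this
      have hlt : τ ⟨j + 1, hj⟩ < τ ⟨j, by omega⟩ := lt_of_le_of_ne h hne
      have := hτ j hj ⟨j, by omega⟩ ⟨j + 1, hj⟩ (by simp [Fin.lt_def]) hlt
      rw [vmax_lt_iff n j hj _ _ (by simp [Fin.lt_def])] at this
      simp at this
    -- τ is strictly monotone, hence the identity
    have hsm : StrictMono τ := by
      have key : ∀ a b : Fin n, a < b → τ a < τ b := by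
        intro a b hab
        by_contra h
        push_neg at h
        have hne : τ b ≠ τ a := fun he => absurd (τ.injective he) (ne_of_gt hab)
        have hlt : τ b < τ a := lt_of_le_of_ne h hne
        obtain ⟨j, hj, h1, h2, h3⟩ := adj_inv_of_inv n τ a b hab hlt
        exact lt_asymm (hmono j hj) h3
      exact key
    have : (τ : Fin n → Fin n) = id := (StrictMono.range_inj hsm strictMono_id).mp
      (by rw [Set.range_id]; exact τ.surjective.range_eq)
    ext x
    simp [congrFun this x]
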